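/- Let p ∈ (1,∞), α ∈ (0,1/p), and η ∈ [1, p/(1-pα)). Choose β with 1/p < β < min{1, α + 1/η}, fix t₀, and define f(t) = 0 for t ∈ [t₀, t₀+1] and f(t) = (t-t₀)^{-β} for t > t₀+1. Then f ∈ L^p(t₀,∞;ℝ) but J^α f ∉ L^η(t₀,∞;ℝ). -/

import Mathlib

open MeasureTheory Set

private lemma shift_iff' (r a t₀ : ℝ) :
    IntegrableOn (fun t => (t - t₀) ^ r) (Set.Ioi (t₀ + a)) volume ↔
      IntegrableOn (fun x : ℝ => x ^ r) (Set.Ioi a) volume := by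
  have h := (measurableEmbedding_addRight t₀).integrableOn_map_iff
    (f := fun t : ℝ => (t - t₀) ^ r) (s := Set.Ioi (t₀ + a)) (μ := volume)
  rw [map_add_right_eq_self] at h
  rw [h]
  have h1 : ((fun x : ℝ => x + t₀) ⁻¹' Set.Ioi (t₀ + a)) = Set.Ioi a := by
    ext x; simp only [Set.mem_preimage, Set.mem_Ioi]; constructor <;> intro <;> linarith
  rw [h1]
  apply integrableOn_congr_fun _ measurableSet_Ioi
  intro x _; simp

private lemma memLp_part1 (p β t₀ : ℝ) (hp : 1 < p) (hβ1 : 1 / p < β)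
    (f : ℝ → ℝ)
    (hf : f = fun t => if t ≤ t₀ + 1 then 0 else (t - t₀) ^ (-β)) :
    MemLp f (ENNReal.ofReal p) (volume.restrict (Set.Ici t₀)) := by
  have hp0 : 0 < p := by linarith
  have hmf : Measurable f := by
    rw [hf]
    exact Measurable.ite (measurableSet_le measurable_id measurable_const)
      measurable_const ((measurable_id.sub measurable_const).pow measurable_const)
  have hβp : 1 < β * p := by
    rw [div_lt_iff₀ hp0] at hβ1; linarith [hβ1]
  -- integrability of the p-th power
  have hint : IntegrableOn (fun t => ‖f t‖ ^ p) (Set.Ici t₀) volume := by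
    have h2 : IntegrableOn (fun t => ‖f t‖ ^ p) (Set.Ioi (t₀ + 1)) volume := by
      have : IntegrableOn (fun t => (t - t₀) ^ (-(β * p))) (Set.Ioi (t₀ + 1)) volume := by
        rw [shift_iff']
        rw [integrableOn_Ioi_rpow_iff one_pos]
        linarith
      apply this.congr_fun _ measurableSet_Ioi
      intro x hx
      simp only [Set.mem_Ioi] at hx
      rw [hf]
      simp only [if_neg (by linarith : ¬ x ≤ t₀ + 1)]
      rw [Real.norm_eq_abs, abs_of_nonneg (Real.rpow_nonneg (by linarith) _),
        ← Real.rpow_mul (by linarith : (0:ℝ) ≤ x - t₀), neg_mul]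
    have h1 : IntegrableOn (fun t => ‖f t‖ ^ p) (Set.Icc t₀ (t₀ + 1)) volume := by
      have h0 : IntegrableOn (fun _ : ℝ => (0:ℝ)) (Set.Icc t₀ (t₀ + 1)) volume :=
        integrableOn_const measure_Icc_lt_top.ne
      apply h0.congr_fun _ measurableSet_Icc
      intro x hx
      rw [hf]
      simp only [if_pos hx.2, norm_zero]
      exact (Real.zero_rpow (by linarith)).symm
    have : Set.Ici t₀ ⊆ Set.Icc t₀ (t₀ + 1) ∪ Set.Ioi (t₀ + 1) := by
      intro x hx; by_cases h : x ≤ t₀ + 1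
      · exact Or.inl ⟨hx, h⟩
      · exact Or.inr (by simpa using lt_of_not_ge h)
    exact (h1.union h2).mono_set this
  constructor
  · exact hmf.aestronglyMeasurable
  · rw [eLpNorm_lt_top_iff_lintegral_rpow_enorm_lt_top (by simp [hp0]) (by simp)]
    have htr : (ENNReal.ofReal p).toReal = p := ENNReal.toReal_ofReal hp0.le
    rw [htr]
    have := hint.2  -- HasFiniteIntegral
    rw [hasFiniteIntegral_iff_ofReal] at this
    · refine lt_of_eq_of_lt ?_ this
      apply lintegral_congr
      intro a
      rw [← ENNReal.ofReal_rpow_of_nonneg (norm_nonneg _) hp0.le, ofReal_norm]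
    · filter_upwards with a
      positivity

private lemma rl_lower' (α β t₀ : ℝ) (hα : 0 < α) (hα1 : α < 1) (hβ0 : 0 < β)
    (f : ℝ → ℝ)
    (hf : f = fun t => if t ≤ t₀ + 1 then 0 else (t - t₀) ^ (-β))
    (t : ℝ) (ht : t₀ + 4 ≤ t) :
    (t - t₀) ^ (α - β) / 4 ≤ ∫ s in t₀..t, (t - s) ^ (α - 1) * f s := by
  set u := t - t₀ with hu
  have hu4 : 4 ≤ u := by rw [hu]; linarith
  have hu0 : 0 < u := by linarith
  have htt : t₀ ≤ t := by linarith
  set K : ℝ → ℝ := fun s => (t - s) ^ (α - 1) * f s with hK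
  have hfnn : ∀ s, t₀ ≤ s → 0 ≤ f s := by
    intro s hs; rw [hf]; dsimp only
    split
    · exact le_refl 0
    · exact Real.rpow_nonneg (by linarith) _
  have hfle : ∀ s, t₀ + 1 < s → f s = (s - t₀) ^ (-β) := by
    intro s hs; rw [hf]; dsimp only; rw [if_neg (by linarith)]
  have hfone : ∀ s, 0 ≤ f s ∧ f s ≤ 1 := by
    intro s; rw [hf]; dsimp only
    split
    · exact ⟨le_refl 0, zero_le_one⟩
    · have h1 : (1:ℝ) ≤ s - t₀ := by
        have := lt_of_not_ge (by assumption : ¬ s ≤ t₀ + 1); linarith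
      exact ⟨Real.rpow_nonneg (by linarith) _,
        Real.rpow_le_one_of_one_le_of_nonpos h1 (by linarith)⟩
  have hKnn : ∀ s ∈ Ioc t₀ t, 0 ≤ K s := by
    intro s hs
    exact mul_nonneg (Real.rpow_nonneg (by linarith [hs.2]) _) (hfone s).1
  have hmf : Measurable f := by
    rw [hf]
    exact Measurable.ite (measurableSet_le measurable_id measurable_const)
      measurable_const ((measurable_id.sub measurable_const).pow measurable_const)
  have hmK : Measurable K :=
    ((measurable_const.sub measurable_id).pow measurable_const).mul hmf
  -- integrability of K on Ioc t₀ t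
  have hg : IntegrableOn (fun s => (t - s) ^ (α - 1)) (Ioc t₀ t) volume := by
    have h0 : IntervalIntegrable (fun x : ℝ => x ^ (α - 1)) volume 0 (t - t₀) :=
      intervalIntegral.intervalIntegrable_rpow' (by linarith)
    have h1 := h0.comp_sub_left t
    simp only [sub_zero, sub_sub_cancel] at h1
    have h2 := h1.symm
    rwa [intervalIntegrable_iff_integrableOn_Ioc_of_le htt] at h2
  have hKint : IntegrableOn K (Ioc t₀ t) volume := by
    apply Integrable.mono hg hmK.aestronglyMeasurable
    rw [ae_restrict_iff' measurableSet_Ioc]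
    apply Filter.Eventually.of_forall
    intro s hs
    have h1 : 0 ≤ (t - s) ^ (α - 1) := Real.rpow_nonneg (by linarith [hs.2]) _
    rw [Real.norm_eq_abs, Real.norm_eq_abs, abs_of_nonneg (hKnn s hs), abs_of_nonneg h1]
    calc K s ≤ (t - s) ^ (α - 1) * 1 :=
          mul_le_mul_of_nonneg_left (hfone s).2 h1
      _ = (t - s) ^ (α - 1) := mul_one _
  have hsub : Ioc (t₀ + 1) (t₀ + u / 2) ⊆ Ioc t₀ t := by
    intro s hs; exact ⟨by linarith [hs.1], by linarith [hs.2]⟩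
  -- step 1: interval integral to set integral
  rw [intervalIntegral.integral_of_le htt]
  -- step 2: restrict to subinterval
  have hmono : ∫ s in Ioc (t₀ + 1) (t₀ + u / 2), K s ≤ ∫ s in Ioc t₀ t, K s := by
    apply setIntegral_mono_set hKint
    · exact (ae_restrict_iff' measurableSet_Ioc).mpr (Filter.Eventually.of_forall hKnn)
    · exact Filter.Eventually.of_forall hsub
  -- step 3: constant lower bound on the subinterval
  set m : ℝ := u ^ (α - 1) * u ^ (-β) with hm
  have hmnn : 0 ≤ m := mul_nonneg (Real.rpow_nonneg hu0.le _) (Real.rpow_nonneg hu0.le _)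
  have hconst : ∀ s ∈ Ioc (t₀ + 1) (t₀ + u / 2), m ≤ K s := by
    intro s hs
    obtain ⟨hs1, hs2⟩ := hs
    have hts1 : u / 2 ≤ t - s := by linarith
    have hts2 : t - s ≤ u := by linarith
    have h1 : u ^ (α - 1) ≤ (t - s) ^ (α - 1) :=
      Real.rpow_le_rpow_of_nonpos (by linarith) hts2 (by linarith)
    have h2 : u ^ (-β) ≤ f s := by
      rw [hfle s hs1]
      exact Real.rpow_le_rpow_of_nonpos (by linarith) (by linarith) (by linarith)
    exact mul_le_mul h1 h2 (Real.rpow_nonneg hu0.le _)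
      (Real.rpow_nonneg (by linarith) _)
  have hlen : (volume (Ioc (t₀ + 1) (t₀ + u / 2))).toReal = u / 2 - 1 := by
    rw [Real.volume_Ioc, ENNReal.toReal_ofReal (by linarith)]
    ring
  have hbound := setIntegral_ge_of_const_le measurableSet_Ioc
    (measure_Ioc_lt_top).ne hconst (hKint.mono_set hsub)
  rw [measureReal_def, hlen, smul_eq_mul] at hbound
  -- step 4: arithmetic
  have harr : u ^ (α - β) / 4 ≤ m * (u / 2 - 1) := by
    have hm1 : m = u ^ (α - 1 - β) := by
      rw [hm, ← Real.rpow_add hu0]; ring_nf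
    have hm2 : u ^ (α - 1 - β) * u = u ^ (α - β) := by
      rw [← Real.rpow_add_one hu0.ne']; ring_nf
    calc u ^ (α - β) / 4 = u ^ (α - 1 - β) * (u / 4) := by
          rw [← hm2]; ring
      _ ≤ u ^ (α - 1 - β) * (u / 2 - 1) :=
          mul_le_mul_of_nonneg_left (by linarith) (Real.rpow_nonneg hu0.le _)
      _ = m * (u / 2 - 1) := by rw [hm1]
  linarith

/-- Riemann–Liouville fractional integral of order `α` at `t₀`. -/
noncomputable def RL (α t₀ : ℝ) (f : ℝ → ℝ) (t : ℝ) : ℝ :=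
  (1 / Real.Gamma α) * ∫ s in t₀..t, (t - s) ^ (α - 1) * f s

private lemma not_memLp_part2 (p α η β t₀ : ℝ) (hp : 1 < p) (hα : 0 < α) (hαp : α < 1 / p)
    (hη : 1 ≤ η) (hη2 : η < p / (1 - p * α))
    (hβ1 : 1 / p < β) (hβ2 : β < min 1 (α + 1 / η))
    (f : ℝ → ℝ)
    (hf : f = fun t => if t ≤ t₀ + 1 then 0 else (t - t₀) ^ (-β)) :
    ¬ MemLp (RL α t₀ f) (ENNReal.ofReal η) (volume.restrict (Set.Ici t₀)) := by
  intro hmem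
  have hp0 : 0 < p := by linarith
  have hpinv : 1 / p < 1 := by rw [div_lt_one hp0]; exact hp
  have hα1 : α < 1 := lt_trans hαp hpinv
  have hβ0 : 0 < β := lt_trans (by positivity) hβ1
  have hη0 : 0 < η := by linarith
  have hβη : β < α + 1 / η := lt_of_lt_of_le hβ2 (min_le_right _ _)
  have hΓ : 0 < Real.Gamma α := Real.Gamma_pos_of_pos hα
  set c : ℝ := 1 / (4 * Real.Gamma α) with hc
  have hc0 : 0 < c := by positivity
  -- pointwise lower bound on RL
  have hlow : ∀ t, t₀ + 4 ≤ t → c * (t - t₀) ^ (α - β) ≤ RL α t₀ f t := by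
    intro t ht
    have h1 := rl_lower' α β t₀ hα hα1 hβ0 f hf t ht
    have h2 : (0:ℝ) ≤ 1 / Real.Gamma α := by positivity
    calc c * (t - t₀) ^ (α - β) = (1 / Real.Gamma α) * ((t - t₀) ^ (α - β) / 4) := by
          rw [hc]; ring
      _ ≤ (1 / Real.Gamma α) * ∫ s in t₀..t, (t - s) ^ (α - 1) * f s :=
          mul_le_mul_of_nonneg_left h1 h2
      _ = RL α t₀ f t := rfl
  -- finiteness of the η-lintegral
  have hne0 : (ENNReal.ofReal η) ≠ 0 := by simp [hη0]
  have A := lintegral_rpow_enorm_lt_top_of_eLpNorm_lt_top hne0 (by simp) hmem.2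
  rw [ENNReal.toReal_ofReal hη0.le] at A
  -- the minorant
  set G : ℝ → ℝ := fun t => c ^ η * (t - t₀) ^ ((α - β) * η) with hG
  have hptw : ∀ t ∈ Ioi (t₀ + 4),
      ENNReal.ofReal (G t) ≤ (‖RL α t₀ f t‖₊ : ENNReal) ^ η := by
    intro t ht
    simp only [mem_Ioi] at ht
    have ht' : t₀ + 4 ≤ t := ht.le
    have htt : (0:ℝ) ≤ t - t₀ := by linarith
    have h1 : G t = (c * (t - t₀) ^ (α - β)) ^ η := by
      rw [hG, Real.mul_rpow hc0.le (Real.rpow_nonneg htt _), ← Real.rpow_mul htt]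
    have h2 : c * (t - t₀) ^ (α - β) ≤ ‖RL α t₀ f t‖ :=
      le_trans (hlow t ht') (le_abs_self _)
    have h3 : G t ≤ ‖RL α t₀ f t‖ ^ η := by
      rw [h1]
      exact Real.rpow_le_rpow (by positivity) h2 hη0.le
    calc ENNReal.ofReal (G t) ≤ ENNReal.ofReal (‖RL α t₀ f t‖ ^ η) :=
          ENNReal.ofReal_le_ofReal h3
      _ = ENNReal.ofReal ‖RL α t₀ f t‖ ^ η :=
          (ENNReal.ofReal_rpow_of_nonneg (norm_nonneg _) hη0.le).symm
      _ = (‖RL α t₀ f t‖₊ : ENNReal) ^ η := by rw [ofReal_norm, enorm_eq_nnnorm]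
  -- transfer finiteness to G
  have hB : ∫⁻ t in Ioi (t₀ + 4), ENNReal.ofReal (G t) < ⊤ := by
    have hsub : Ioi (t₀ + 4) ⊆ Ici t₀ := by
      intro x hx
      simp only [mem_Ioi] at hx
      show t₀ ≤ x
      linarith
    have key : ∫⁻ t in Ioi (t₀ + 4), ENNReal.ofReal (G t) ∂volume
        ≤ ∫⁻ t, (‖RL α t₀ f t‖₊ : ENNReal) ^ η ∂(volume.restrict (Ici t₀)) := by
      have e1 : (volume.restrict (Ici t₀)).restrict (Ioi (t₀ + 4))
          = volume.restrict (Ioi (t₀ + 4)) := by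
        rw [Measure.restrict_restrict measurableSet_Ioi,
          inter_eq_self_of_subset_left hsub]
      calc ∫⁻ t in Ioi (t₀ + 4), ENNReal.ofReal (G t) ∂volume
          = ∫⁻ t in Ioi (t₀ + 4), ENNReal.ofReal (G t) ∂(volume.restrict (Ici t₀)) := by
            rw [e1]
        _ = ∫⁻ t, (Ioi (t₀ + 4)).indicator (fun t => ENNReal.ofReal (G t)) t
              ∂(volume.restrict (Ici t₀)) := by
            rw [lintegral_indicator measurableSet_Ioi]
        _ ≤ ∫⁻ t, (‖RL α t₀ f t‖₊ : ENNReal) ^ η ∂(volume.restrict (Ici t₀)) := by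
            apply lintegral_mono
            intro t
            by_cases h : t ∈ Ioi (t₀ + 4)
            · rw [indicator_of_mem h]; exact hptw t h
            · rw [indicator_of_notMem h]; exact zero_le
    exact lt_of_le_of_lt key A
  -- integrability of G
  have hGm : Measurable G := by
    exact (((measurable_id.sub measurable_const).pow measurable_const).const_mul _)
  have hGint : IntegrableOn G (Ioi (t₀ + 4)) volume := by
    refine ⟨hGm.aestronglyMeasurable, ?_⟩
    rw [hasFiniteIntegral_iff_ofReal]
    · exact hB
    · refine (ae_restrict_iff' measurableSet_Ioi).mpr (Filter.Eventually.of_forall ?_)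
      intro t ht
      simp only [mem_Ioi] at ht
      have h9 : (0:ℝ) ≤ t - t₀ := by linarith
      show (0:ℝ) ≤ c ^ η * (t - t₀) ^ ((α - β) * η)
      positivity
  -- remove the constant
  have hcη : c ^ η ≠ 0 := by positivity
  have hint2 : IntegrableOn (fun t => (t - t₀) ^ ((α - β) * η)) (Ioi (t₀ + 4)) volume := by
    have h1 := hGint.const_mul (c ^ η)⁻¹
    apply h1.congr
    apply Filter.Eventually.of_forall
    intro t
    rw [hG]
    field_simp
  rw [shift_iff'] at hint2
  rw [integrableOn_Ioi_rpow_iff (by norm_num : (0:ℝ) < 4)] at hint2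
  -- contradiction with (α - β) * η > -1
  have h5 : (β - α) * η < 1 := by
    have := mul_lt_mul_of_pos_right (show β - α < 1 / η by linarith) hη0
    rwa [one_div, inv_mul_cancel₀ hη0.ne'] at this
  nlinarith

theorem stmt11 (p α η β t₀ : ℝ) (hp : 1 < p) (hα : 0 < α) (hαp : α < 1 / p)
    (hη : 1 ≤ η) (hη2 : η < p / (1 - p * α))
    (hβ1 : 1 / p < β) (hβ2 : β < min 1 (α + 1 / η))
    (f : ℝ → ℝ)
    (hf : f = fun t => if t ≤ t₀ + 1 then 0 else (t - t₀) ^ (-β)) :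
    MemLp f (ENNReal.ofReal p) (volume.restrict (Set.Ici t₀)) ∧
    ¬ MemLp (RL α t₀ f) (ENNReal.ofReal η) (volume.restrict (Set.Ici t₀)) :=
  ⟨memLp_part1 p β t₀ hp hβ1 f hf,
   not_memLp_part2 p α η β t₀ hp hα hαp hη hη2 hβ1 hβ2 f hf⟩
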